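/- Let n = N and suppose B : Matrix (Fin n) (Fin n) ℝ is invertible. If x : ℝ → (Fin n → ℝ) is a positive solution of the QP system ẋ_i = x_i · Σ_j A_{ij} Π_k x_k^{B_{jk}}, then the transformed variables y_i = Π_k x_k^{B_{ik}} satisfy the Lotka-Volterra system ẏ_i = y_i · Σ_j (B·A)_{ij} · y_j. -/

import Mathlib

open Matrix Finset

/-- Reduction of a square QP system with invertible exponent matrix `B` to the
Lotka-Volterra canonical form: the monomials `y i = ∏ k, x k ^ B i k` satisfy
`ẏ i = y i * ∑ j, (B * A) i j * y j`. -/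
theorem square_qp_to_lotka_volterra (n : ℕ) (A B : Matrix (Fin n) (Fin n) ℝ)
    (hB : IsUnit B) (x : ℝ → Fin n → ℝ) (hpos : ∀ t i, 0 < x t i)
    (hx : ∀ t i, HasDerivAt (fun s => x s i)
      (x t i * ∑ j, A i j * ∏ k, x t k ^ B j k) t) :
    ∀ t i, HasDerivAt (fun s => ∏ k, x s k ^ B i k)
      ((∏ k, x t k ^ B i k) * ∑ j, (B * A) i j * ∏ k, x t k ^ B j k) t := by
  intro t i
  -- derivative of g s = ∑ k, B i k * log (x s k)
  have hg : HasDerivAt (fun s => ∑ k, B i k * Real.log (x s k))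
      (∑ k, B i k * ∑ j, A k j * ∏ l, x t l ^ B j l) t := by
    apply HasDerivAt.fun_sum
    intro k _
    have hlog : HasDerivAt (fun s => Real.log (x s k))
        ((x t k * ∑ j, A k j * ∏ l, x t l ^ B j l) / x t k) t :=
      (hx t k).log (ne_of_gt (hpos t k))
    rw [mul_div_cancel_left₀ _ (ne_of_gt (hpos t k))] at hlog
    exact hlog.const_mul _
  have hexp := hg.exp
  have heq : (fun s => Real.exp (∑ k, B i k * Real.log (x s k)))
      = fun s => ∏ k, x s k ^ B i k := by
    funext s
    rw [Real.exp_sum]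
    exact Finset.prod_congr rfl fun k _ => by
      rw [Real.rpow_def_of_pos (hpos s k), mul_comm]
  rw [heq] at hexp
  convert hexp using 1
  have hy : Real.exp (∑ k, B i k * Real.log (x t k)) = ∏ k, x t k ^ B i k := by
    rw [Real.exp_sum]
    exact Finset.prod_congr rfl fun k _ => by
      rw [Real.rpow_def_of_pos (hpos t k), mul_comm]
  rw [hy]
  congr 1
  simp only [Matrix.mul_apply, Finset.sum_mul, Finset.mul_sum]
  rw [Finset.sum_comm]
  exact Finset.sum_congr rfl fun k _ => Finset.sum_congr rfl fun j _ => by ring
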